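/- Let f(z) = ∑ a_n z^n be analytic on the unit disc with (a_n) a decreasing sequence of nonnegative real numbers. If f belongs to the Bloch space (sup_{z∈D}(1-|z|²)|f'(z)| < ∞), then a_n = O(1/n). -/

import Mathlib

open MeasureTheory Set Metric Complex

lemma aux_summable_pow (r : ℝ) (hr0 : 0 < r) (hr1 : r < 1) :
    Summable (fun n : ℕ => (n : ℝ) * r ^ (n - 1)) := by
  have h : Summable (fun n : ℕ => (n : ℝ) ^ 1 * r ^ n) :=
    summable_pow_mul_geometric_of_norm_lt_one 1 (by rwa [Real.norm_eq_abs, abs_of_pos hr0])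
  refine (h.mul_right r⁻¹).congr fun n => ?_
  cases n with
  | zero => simp
  | succ m =>
    simp only [pow_one, Nat.add_sub_cancel]
    rw [pow_succ]
    field_simp

lemma hasDerivAt_aux (a : ℕ → ℝ) (ha0 : ∀ n, a n ≤ a 0) (hnn : ∀ n, 0 ≤ a n)
    (z : ℂ) (hz : ‖z‖ < 1) :
    HasDerivAt (fun w : ℂ => ∑' n : ℕ, (a n : ℂ) * w ^ n)
      (∑' n : ℕ, (a n : ℂ) * ((n : ℂ) * z ^ (n - 1))) z := by
  set ρ : ℝ := (‖z‖ + 1) / 2 with hρdef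
  have hz0 : 0 ≤ ‖z‖ := norm_nonneg z
  have hzρ : ‖z‖ < ρ := by rw [hρdef]; linarith
  have hρ1 : ρ < 1 := by rw [hρdef]; linarith
  have hρ0 : 0 < ρ := by rw [hρdef]; linarith
  have hsum_u : Summable (fun n : ℕ => a 0 * ((n : ℝ) * ρ ^ (n - 1))) :=
    (aux_summable_pow ρ hρ0 hρ1).mul_left (a 0)
  have hbound : ∀ (n : ℕ) (w : ℂ), w ∈ Metric.ball (0 : ℂ) ρ →
      ‖(a n : ℂ) * ((n : ℂ) * w ^ (n - 1))‖ ≤ a 0 * ((n : ℝ) * ρ ^ (n - 1)) := by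
    intro n w hw
    rw [mem_ball_zero_iff] at hw
    rw [norm_mul, norm_mul, norm_pow, Complex.norm_real, Complex.norm_natCast,
      Real.norm_eq_abs, _root_.abs_of_nonneg (hnn n)]
    have h1 : ‖w‖ ^ (n - 1) ≤ ρ ^ (n - 1) := pow_le_pow_left₀ (norm_nonneg w) hw.le _
    have h2 : a n ≤ a 0 := ha0 n
    have := hnn n
    have hn0 : (0:ℝ) ≤ (n:ℝ) := Nat.cast_nonneg n
    exact mul_le_mul h2 (mul_le_mul_of_nonneg_left h1 hn0)
      (by positivity) (hnn 0)
  have hunif : TendstoUniformlyOn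
      (fun (t : Finset ℕ) (w : ℂ) => ∑ n ∈ t, (a n : ℂ) * ((n : ℂ) * w ^ (n - 1)))
      (fun w => ∑' n : ℕ, (a n : ℂ) * ((n : ℂ) * w ^ (n - 1))) Filter.atTop
      (Metric.ball (0 : ℂ) ρ) :=
    tendstoUniformlyOn_tsum hsum_u hbound
  refine hasDerivAt_of_tendstoUniformlyOn
    (f := fun (t : Finset ℕ) (w : ℂ) => ∑ n ∈ t, (a n : ℂ) * w ^ n)
    (Metric.isOpen_ball) hunif ?_ ?_
    (mem_ball_zero_iff.2 hzρ)
  · filter_upwards with t w _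
    exact HasDerivAt.fun_sum fun n _ => HasDerivAt.const_mul ((a n : ℂ)) (hasDerivAt_pow n w)
  · intro w hw
    rw [mem_ball_zero_iff] at hw
    have : Summable (fun n : ℕ => (a n : ℂ) * w ^ n) := by
      refine Summable.of_norm ?_
      refine Summable.of_nonneg_of_le (fun n => norm_nonneg _)
        (fun n => ?_) ((summable_geometric_of_lt_one hρ0.le hρ1).mul_left (a 0))
      rw [norm_mul, norm_pow, Complex.norm_real, Real.norm_eq_abs, _root_.abs_of_nonneg (hnn n)]
      have h1 : ‖w‖ ^ n ≤ ρ ^ n := pow_le_pow_left₀ (norm_nonneg w) hw.le _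
      have := hnn n; have := ha0 n
      nlinarith [pow_nonneg (norm_nonneg w) n, pow_nonneg hρ0.le n]
    exact this.hasSum

theorem decreasing_coeff_Bloch (a : ℕ → ℝ) (hmono : Antitone a) (hnn : ∀ n, 0 ≤ a n)
    (hsum : ∀ z ∈ Metric.ball (0:ℂ) 1, Summable (fun n : ℕ => (a n : ℂ) * z ^ n))
    (hbloch : ∃ C : ℝ, ∀ z ∈ Metric.ball (0:ℂ) 1,
      (1 - ‖z‖ ^ 2) *
        ‖deriv (fun w : ℂ => ∑' n : ℕ, (a n : ℂ) * w ^ n) z‖ ≤ C) :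
    ∃ C : ℝ, ∀ n : ℕ, 1 ≤ n → a n ≤ C / n := by
  obtain ⟨C, hC⟩ := hbloch
  have ha0 : ∀ n, a n ≤ a 0 := fun n => hmono (Nat.zero_le n)
  refine ⟨8 * C, fun n hn => ?_⟩
  set r : ℝ := 1 - 1 / (2 * n) with hrdef
  have hn1 : (1:ℝ) ≤ n := by exact_mod_cast hn
  have hr0 : 0 < r := by
    rw [hrdef]
    have : 1 / (2 * (n:ℝ)) ≤ 1/2 := by
      apply div_le_div_of_nonneg_left <;> linarith
    linarith
  have hr1 : r < 1 := by
    rw [hrdef]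
    have : 0 < 1 / (2 * (n:ℝ)) := by positivity
    linarith
  have hrC : ‖((r : ℂ))‖ = r := by
    rw [Complex.norm_real, Real.norm_eq_abs, abs_of_pos hr0]
  have hmem : (r : ℂ) ∈ Metric.ball (0:ℂ) 1 := by
    rw [mem_ball_zero_iff, hrC]; exact hr1
  -- derivative value
  have hder := hasDerivAt_aux a ha0 hnn (r : ℂ) (by rw [hrC]; exact hr1)
  have hderiv : deriv (fun w : ℂ => ∑' n : ℕ, (a n : ℂ) * w ^ n) (r : ℂ)
      = ∑' k : ℕ, (a k : ℂ) * ((k : ℂ) * (r:ℂ) ^ (k - 1)) := hder.deriv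
  -- the real series
  have hsumS : Summable (fun k : ℕ => a k * ((k : ℝ) * r ^ (k - 1))) := by
    refine Summable.of_nonneg_of_le (fun k => mul_nonneg (hnn k) (by positivity))
      (fun k => ?_) ((aux_summable_pow r hr0 hr1).mul_left (a 0))
    have := ha0 k
    have h1 : (0:ℝ) ≤ (k:ℝ) * r ^ (k-1) := by positivity
    nlinarith
  set S : ℝ := ∑' k : ℕ, a k * ((k : ℝ) * r ^ (k - 1)) with hSdef
  have hcast : (∑' k : ℕ, (a k : ℂ) * ((k : ℂ) * (r:ℂ) ^ (k - 1))) = (S : ℂ) := by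
    rw [hSdef]
    rw [Complex.ofReal_tsum]
    refine tsum_congr fun k => ?_
    push_cast
    ring
  have hS0 : 0 ≤ S := tsum_nonneg fun k => mul_nonneg (hnn k) (by positivity)
  have hnormS : ‖deriv (fun w : ℂ => ∑' n : ℕ, (a n : ℂ) * w ^ n) (r : ℂ)‖ = S := by
    rw [hderiv, hcast, Complex.norm_real, Real.norm_eq_abs, _root_.abs_of_nonneg hS0]
  -- lower bound on S
  have hpart : ∑ k ∈ Finset.range (n+1), a k * ((k : ℝ) * r ^ (k - 1)) ≤ S :=
    Summable.sum_le_tsum _ (fun k _ => mul_nonneg (hnn k) (by positivity)) hsumS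
  have hrn : (1:ℝ)/2 ≤ r ^ n := by
    have hb : (-2:ℝ) ≤ -(1 / (2 * (n:ℝ))) := by
      have : 1 / (2 * (n:ℝ)) ≤ 1/2 := by
        apply div_le_div_of_nonneg_left <;> linarith
      linarith
    have := one_add_mul_le_pow hb n
    have heq : (1:ℝ) + (n:ℝ) * -(1 / (2 * (n:ℝ))) = 1/2 := by
      field_simp
      ring
    rw [heq] at this
    calc (1:ℝ)/2 ≤ (1 + -(1 / (2 * (n:ℝ))))^n := by
          convert this using 2
      _ = r ^ n := by rw [hrdef]; ring_nf
  -- partial sum lower bound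
  have hterm : ∀ k ∈ Finset.range (n+1),
      (k:ℝ) * (a n * r ^ n) ≤ a k * ((k : ℝ) * r ^ (k - 1)) := by
    intro k hk
    rw [Finset.mem_range] at hk
    have hkn : k ≤ n := Nat.lt_succ_iff.mp hk
    have hak : a n ≤ a k := hmono hkn
    have hrk : r ^ n ≤ r ^ (k - 1) :=
      pow_le_pow_of_le_one hr0.le hr1.le (by omega)
    have hk0 : (0:ℝ) ≤ (k:ℝ) := Nat.cast_nonneg k
    have han : 0 ≤ a n := hnn n
    have hrn0 : 0 ≤ r ^ n := by positivity
    have hmm : a n * r ^ n ≤ a k * r ^ (k - 1) := mul_le_mul hak hrk hrn0 (hnn k)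
    calc (k:ℝ) * (a n * r ^ n) ≤ (k:ℝ) * (a k * r ^ (k - 1)) :=
          mul_le_mul_of_nonneg_left hmm hk0
      _ = a k * ((k : ℝ) * r ^ (k - 1)) := by ring
  have hgauss : ∑ k ∈ Finset.range (n+1), (k:ℝ) = (n:ℝ) * (n+1) / 2 := by
    have := Finset.sum_range_id_mul_two (n+1)
    have h2 : ((∑ i ∈ Finset.range (n+1), i) * 2 : ℕ) = ((n+1) * n : ℕ) := this
    have h3 : ((∑ i ∈ Finset.range (n+1), i : ℕ) : ℝ) * 2 = ((n:ℝ)+1) * n := by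
      exact_mod_cast congrArg (Nat.cast : ℕ → ℝ) h2
    push_cast at h3 ⊢
    linarith
  have hSlb : (n:ℝ)^2 * a n / 4 ≤ S := by
    have h1 : ∑ k ∈ Finset.range (n+1), (k:ℝ) * (a n * r ^ n)
        ≤ ∑ k ∈ Finset.range (n+1), a k * ((k : ℝ) * r ^ (k - 1)) :=
      Finset.sum_le_sum hterm
    have h2 : ∑ k ∈ Finset.range (n+1), (k:ℝ) * (a n * r ^ n)
        = ((n:ℝ) * (n+1) / 2) * (a n * r ^ n) := by
      rw [← Finset.sum_mul, hgauss]
    have han : 0 ≤ a n := hnn n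
    have h3 : (n:ℝ)^2 * a n / 4 ≤ ((n:ℝ) * (n+1) / 2) * (a n * r ^ n) := by
      have hq : (n:ℝ)^2 * a n / 4 ≤ ((n:ℝ) * (n+1) / 2) * (a n * (1/2)) := by
        nlinarith
      have hq2 : ((n:ℝ) * (n+1) / 2) * (a n * (1/2))
          ≤ ((n:ℝ) * (n+1) / 2) * (a n * r ^ n) := by
        have hpos : (0:ℝ) ≤ (n:ℝ) * (n+1) / 2 := by positivity
        have hh : a n * (1/2) ≤ a n * r ^ n := mul_le_mul_of_nonneg_left hrn han
        exact mul_le_mul_of_nonneg_left hh hpos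
      linarith
    linarith
  have hBl := hC _ hmem
  rw [hrC, hnormS] at hBl
  have h1r2 : 1 / (2 * (n:ℝ)) ≤ 1 - r ^ 2 := by
    have : 1 - r ^ 2 = (1 / (2 * (n:ℝ))) * (1 + r) := by
      rw [hrdef]; field_simp; ring
    rw [this]
    nlinarith [mul_nonneg (by positivity : (0:ℝ) ≤ 1 / (2 * (n:ℝ))) hr0.le]
  have h1r2' : (0:ℝ) ≤ 1 - r ^ 2 := by nlinarith
  have key : (1 / (2 * (n:ℝ))) * ((n:ℝ)^2 * a n / 4) ≤ (1 - r ^ 2) * S :=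
    mul_le_mul h1r2 hSlb (by have := hnn n; positivity) h1r2'
  have hkey2 : (n:ℝ) * a n / 8 = (1 / (2 * (n:ℝ))) * ((n:ℝ)^2 * a n / 4) := by
    field_simp
    ring
  have hfin : (n:ℝ) * a n / 8 ≤ C := by rw [hkey2]; exact le_trans key hBl
  rw [le_div_iff₀ (by linarith : (0:ℝ) < (n:ℝ))]
  linarith
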